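/- Let G₁, G₂, G₃ be groups with automatic structures L₁ ⊆ A₁*, L₂ ⊆ A₂*, L₃ ⊆ A₃* for surjective monoid homomorphisms π₁, π₂, π₃ respectively, and let φ₁ : G₁ → G₂ and φ₂ : G₂ → G₃ be group homomorphisms. If the BRP holds for (φ₁, L₁, L₂) and for (φ₂, L₂, L₃), then the BRP holds for (φ₁φ₂, L₁, L₃); the same implication holds with the BRP replaced throughout by the synchronous BRP, and with the BRP replaced throughout by the FT-BRP. -/

import Mathlib

open scoped NNReal

namespace Auto

/-- The generating set `Aπ ∪ (Aπ)⁻¹` of `G` determined by `π : A* → G`. -/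
def gens {A G : Type*} [Group G] (π : FreeMonoid A →* G) : Set G :=
  (Set.range fun a : A => π (FreeMonoid.of a)) ∪
    Set.range fun a : A => (π (FreeMonoid.of a))⁻¹

/-- The word metric `d_A` on `G`: the least `n` such that `g⁻¹h` is a product of `n`
elements of `Aπ ∪ (Aπ)⁻¹`. -/
noncomputable def wdist {A G : Type*} [Group G] (π : FreeMonoid A →* G) (g h : G) : ℕ :=
  sInf {n : ℕ | ∃ l : List G, l.length = n ∧ (∀ x ∈ l, x ∈ gens π) ∧ l.prod = g⁻¹ * h}

/-- Evaluation of a word of `A*` in `G`. -/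
def evalW {A G : Type*} [Group G] (π : FreeMonoid A →* G) (w : List A) : G :=
  π (FreeMonoid.ofList w)

/-- `u` and `v` `p`-fellow travel: `d_A(u^[n]π, v^[n]π) ≤ p` for all `n`. -/
def FellowTravel {A G : Type*} [Group G] (π : FreeMonoid A →* G) (p : ℝ≥0)
    (u v : List A) : Prop :=
  ∀ n : ℕ, (wdist π (evalW π (u.take n)) (evalW π (v.take n)) : ℝ≥0) ≤ p

/-- `u` and `v` are `p`-meeting-fellow-travellers. -/
def MFT {A G : Type*} [Group G] (π : FreeMonoid A →* G) (p : ℝ≥0) (u v : List A) : Prop :=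
  FellowTravel π p u v ∧ evalW π u = evalW π v

/-- A language is regular if it is accepted by a finite-state automaton. -/
def IsRegular {A : Type*} (L : Language A) : Prop :=
  ∃ (σ : Type) (_ : Fintype σ) (M : DFA A σ), M.accepts = L

/-- `L` is an automatic structure for `π`. -/
structure IsAutomaticStructure {A G : Type*} [Group G] (π : FreeMonoid A →* G)
    (L : Language A) : Prop where
  regular : IsRegular L
  onto : ∀ g : G, ∃ w ∈ L, evalW π w = g
  ft : ∃ N : ℕ, ∀ u ∈ L, ∀ v ∈ L,
    wdist π (evalW π u) (evalW π v) ≤ 1 → FellowTravel π N u v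

/-- Evaluation of an element of `A ∪ {ε}`. -/
def evalOpt {A G : Type*} [Group G] (π : FreeMonoid A →* G) : Option A → G
  | none => 1
  | some a => π (FreeMonoid.of a)

/-- `L` is a biautomatic structure for `π`. -/
structure IsBiautomaticStructure {A G : Type*} [Group G] (π : FreeMonoid A →* G)
    (L : Language A) extends IsAutomaticStructure π L : Prop where
  bi : ∃ N : ℕ, ∀ u ∈ L, ∀ v ∈ L, ∀ a : Option A,
    evalW π v = evalOpt π a * evalW π u →
    ∀ n : ℕ, wdist π (evalOpt π a * evalW π (u.take n)) (evalW π (v.take n)) ≤ N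

/-- A language is factorial if it is closed under taking factors. -/
def IsFactorial {A : Type*} (L : Language A) : Prop :=
  ∀ u ∈ L, ∀ v : List A, v <:+: u → v ∈ L

/-- `D : ℝ≥0 → ℝ≥0` is a departure function for `(G, L)`. -/
def IsDepartureFunction {A G : Type*} [Group G] (π : FreeMonoid A →* G) (L : Language A)
    (D : ℝ≥0 → ℝ≥0) : Prop :=
  ∀ w ∈ L, ∀ r : ℝ≥0, ∀ s t : ℕ, D r ≤ (t : ℝ≥0) → s + t ≤ w.length →
    r < (wdist π (evalW π (w.take s)) (evalW π (w.take (s + t))) : ℝ≥0)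

/-- Every point of `S` is within distance `N` of `T`. -/
def NbhdIn {A G : Type*} [Group G] (π : FreeMonoid A →* G) (N : ℕ) (S T : Set G) : Prop :=
  ∀ s ∈ S, ∃ t ∈ T, wdist π s t ≤ N

/-- The Hausdorff distance between `S` and `T` is at most `N`. -/
def HausdorffLE {A G : Type*} [Group G] (π : FreeMonoid A →* G) (N : ℕ)
    (S T : Set G) : Prop :=
  NbhdIn π N S T ∧ NbhdIn π N T S

/-- `H` is an `L`-quasiconvex subgroup of `G`. -/
def IsQuasiconvex {A G : Type*} [Group G] (π : FreeMonoid A →* G) (L : Language A)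
    (H : Subgroup G) : Prop :=
  ∃ k : ℕ, ∀ h ∈ H, ∀ h' ∈ H, ∀ w ∈ L, h * evalW π w = h' →
    ∀ n : ℕ, ∃ z ∈ H, wdist π (h * evalW π (w.take n)) z ≤ k

/-- The bounded reduction property for `(φ, L, L')`. -/
def BRP {A B G G' : Type*} [Group G] [Group G'] (π : FreeMonoid A →* G)
    (π' : FreeMonoid B →* G') (φ : G →* G') (L : Language A) (L' : Language B) : Prop :=
  ∃ N : ℕ, ∀ x : G, ∀ α ∈ L, ∀ β ∈ L', evalW π' β = φ (evalW π α) →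
    HausdorffLE π' N (Set.range fun n : ℕ => φ (x * evalW π (α.take n)))
      (Set.range fun n : ℕ => φ x * evalW π' (β.take n))

/-- The synchronous bounded reduction property for `(φ, L, L')`. -/
def SyncBRP {A B G G' : Type*} [Group G] [Group G'] (π : FreeMonoid A →* G)
    (π' : FreeMonoid B →* G') (φ : G →* G') (L : Language A) (L' : Language B) : Prop :=
  ∃ N : ℕ, ∀ x : G, ∀ α ∈ L, ∀ β ∈ L', evalW π' β = φ (evalW π α) →
    ∀ n : ℕ, wdist π' (φ (x * evalW π (α.take n))) (φ x * evalW π' (β.take n)) ≤ N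

/-- The fellow traveller bounded reduction property (FT-BRP) for `(φ, L, L')`. -/
def FTBRP {A B G G' : Type*} [Group G] [Group G'] (π : FreeMonoid A →* G)
    (π' : FreeMonoid B →* G') (φ : G →* G') (L : Language A) (L' : Language B) : Prop :=
  ∀ p : ℝ≥0, ∃ q : ℝ≥0,
    ∀ u₁ ∈ L, ∀ u₂ ∈ L, ∀ u₃ ∈ L, ∀ u₁' ∈ L', ∀ u₂' ∈ L', ∀ u₃' ∈ L',
      evalW π' u₁' = φ (evalW π u₁) → evalW π' u₂' = φ (evalW π u₂) →
        evalW π' u₃' = φ (evalW π u₃) →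
          MFT π p (u₁ ++ u₂) u₃ → MFT π' q (u₁' ++ u₂') u₃'

/-- The natural homomorphism `(A ⊔ B)* → G` agreeing with `π₁` on `A` and `π₂` on `B`. -/
def sumHom {A B G : Type*} [Group G] (π₁ : FreeMonoid A →* G) (π₂ : FreeMonoid B →* G) :
    FreeMonoid (A ⊕ B) →* G :=
  FreeMonoid.lift (Sum.elim (fun a => π₁ (FreeMonoid.of a)) fun b => π₂ (FreeMonoid.of b))

/-- The union `L₁ ∪ L₂` viewed as a language over `A ⊔ B`. -/
def unionLang {A B : Type*} (L₁ : Language A) (L₂ : Language B) : Language (A ⊕ B) :=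
  {w : List (A ⊕ B) | (∃ u ∈ L₁, w = u.map Sum.inl) ∨ ∃ v ∈ L₂, w = v.map Sum.inr}

/-- `L` is an asynchronous automatic structure for `π`. -/
def IsAsyncAutomaticStructure {A G : Type*} [Group G] (π : FreeMonoid A →* G)
    (L : Language A) : Prop :=
  IsRegular L ∧ (∀ g : G, ∃ w ∈ L, evalW π w = g) ∧
    ∃ p : ℕ, ∀ u ∈ L, ∀ v ∈ L, wdist π (evalW π u) (evalW π v) ≤ 1 →
      ∃ φ ψ : ℕ → ℕ, Monotone φ ∧ Monotone ψ ∧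
        Function.Surjective φ ∧ Function.Surjective ψ ∧
          ∀ t : ℕ, wdist π (evalW π (u.take (φ t))) (evalW π (v.take (ψ t))) ≤ p

/-- `L₁` and `L₂` are equivalent automatic structures. -/
def LangEquivalent {A B G : Type*} [Group G] (π₁ : FreeMonoid A →* G)
    (π₂ : FreeMonoid B →* G) (L₁ : Language A) (L₂ : Language B) : Prop :=
  IsAsyncAutomaticStructure (sumHom π₁ π₂) (unionLang L₁ L₂)

/-- `L₁` and `L₂` are synchronously equivalent automatic structures. -/
def LangSyncEquivalent {A B G : Type*} [Group G] (π₁ : FreeMonoid A →* G)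
    (π₂ : FreeMonoid B →* G) (L₁ : Language A) (L₂ : Language B) : Prop :=
  IsAutomaticStructure (sumHom π₁ π₂) (unionLang L₁ L₂)

/-- `L` has the Hausdorff closeness property. -/
def HausClose {A G : Type*} [Group G] (π : FreeMonoid A →* G) (L : Language A) : Prop :=
  ∃ N : ℕ, ∀ u ∈ L, ∀ v ∈ L, wdist π (evalW π u) (evalW π v) ≤ 1 →
    HausdorffLE π N (Set.range fun n : ℕ => evalW π (u.take n))
      (Set.range fun n : ℕ => evalW π (v.take n))

/-- The padded alphabet `C = (A×B) ∪ (A×{$}) ∪ ({$}×B)` of convolution. -/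
abbrev ConvAlphabet (A B : Type*) := (A × B) ⊕ (A ⊕ B)

/-- The convolution `u ⋄ v` of two words. -/
def conv {A B : Type*} : List A → List B → List (ConvAlphabet A B)
  | [], [] => []
  | [], b :: v => Sum.inr (Sum.inr b) :: conv [] v
  | a :: u, [] => Sum.inr (Sum.inl a) :: conv u []
  | a :: u, b :: v => Sum.inl (a, b) :: conv u v
  termination_by u v => u.length + v.length

/-- The convolution `L₁ ⋄ L₂` of two languages. -/
def convLang {A B : Type*} (L₁ : Language A) (L₂ : Language B) :
    Language (ConvAlphabet A B) :=
  {w : List (ConvAlphabet A B) | ∃ u ∈ L₁, ∃ v ∈ L₂, w = conv u v}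

/-- The natural homomorphism `C* → G × G'` for the convolution alphabet. -/
def convHom {A B G G' : Type*} [Group G] [Group G'] (π₁ : FreeMonoid A →* G)
    (π₂ : FreeMonoid B →* G') : FreeMonoid (ConvAlphabet A B) →* G × G' :=
  FreeMonoid.lift fun c =>
    match c with
    | Sum.inl (a, b) => (π₁ (FreeMonoid.of a), π₂ (FreeMonoid.of b))
    | Sum.inr (Sum.inl a) => (π₁ (FreeMonoid.of a), 1)
    | Sum.inr (Sum.inr b) => (1, π₂ (FreeMonoid.of b))

/-- A group is automatic if it admits an automatic structure over some finite alphabet. -/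
def IsAutomaticGroup (G : Type*) [Group G] : Prop :=
  ∃ (A : Type) (_ : Fintype A) (π : FreeMonoid A →* G) (L : Language A),
    IsAutomaticStructure π L

end Auto

open Auto

section AuxWdist

variable {A B G G' : Type*} [Group G] [Group G']

lemma evalW_eq_prod (π : FreeMonoid A →* G) (l : List A) :
    evalW π l = (l.map fun a => π (FreeMonoid.of a)).prod := by
  induction l with
  | nil => simp [evalW, FreeMonoid.ofList_nil]
  | cons a t ih => rw [evalW, FreeMonoid.ofList_cons, map_mul]; simp [← ih, evalW]

lemma wdist_set_nonempty (π : FreeMonoid A →* G) (hπ : Function.Surjective π) (g h : G) :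
    {n : ℕ | ∃ l : List G, l.length = n ∧ (∀ x ∈ l, x ∈ gens π) ∧ l.prod = g⁻¹ * h}.Nonempty := by
  obtain ⟨w, hw⟩ := hπ (g⁻¹ * h)
  refine ⟨_, (FreeMonoid.toList w).map (fun a => π (FreeMonoid.of a)), rfl, ?_, ?_⟩
  · intro x hx
    obtain ⟨a, _, rfl⟩ := List.mem_map.mp hx
    exact Or.inl ⟨a, rfl⟩
  · rw [← evalW_eq_prod, evalW, FreeMonoid.ofList_toList, hw]

lemma wdist_exists (π : FreeMonoid A →* G) (hπ : Function.Surjective π) (g h : G) :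
    ∃ l : List G, l.length = wdist π g h ∧ (∀ x ∈ l, x ∈ gens π) ∧ l.prod = g⁻¹ * h :=
  Nat.sInf_mem (wdist_set_nonempty π hπ g h)

lemma wdist_le (π : FreeMonoid A →* G) {g h : G} {l : List G}
    (hl : ∀ x ∈ l, x ∈ gens π) (hp : l.prod = g⁻¹ * h) : wdist π g h ≤ l.length :=
  Nat.sInf_le ⟨l, rfl, hl, hp⟩

lemma wdist_triangle (π : FreeMonoid A →* G) (hπ : Function.Surjective π) (g h k : G) :
    wdist π g k ≤ wdist π g h + wdist π h k := by
  obtain ⟨l₁, hl₁, hg₁, hp₁⟩ := wdist_exists π hπ g h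
  obtain ⟨l₂, hl₂, hg₂, hp₂⟩ := wdist_exists π hπ h k
  have := wdist_le π (l := l₁ ++ l₂) (g := g) (h := k)
    (fun x hx => (List.mem_append.mp hx).elim (hg₁ x) (hg₂ x))
    (by rw [List.prod_append, hp₁, hp₂]; group)
  simpa [hl₁, hl₂] using this

lemma gens_inv (π : FreeMonoid A →* G) {s : G} (hs : s ∈ gens π) : s⁻¹ ∈ gens π := by
  rcases hs with ⟨a, rfl⟩ | ⟨a, rfl⟩
  · exact Or.inr ⟨a, rfl⟩
  · exact Or.inl ⟨a, by simp⟩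

lemma wdist_symm (π : FreeMonoid A →* G) (g h : G) : wdist π g h = wdist π h g := by
  have key : ∀ g h : G, wdist π h g ≤ wdist π g h := by
    intro g h
    rcases Set.eq_empty_or_nonempty
        {n : ℕ | ∃ l : List G, l.length = n ∧ (∀ x ∈ l, x ∈ gens π) ∧ l.prod = g⁻¹ * h} with
      he | hne
    · have he' : {n : ℕ | ∃ l : List G, l.length = n ∧ (∀ x ∈ l, x ∈ gens π) ∧
          l.prod = h⁻¹ * g} = ∅ := by
        rw [Set.eq_empty_iff_forall_notMem]
        rintro n ⟨l, _, hg', hp'⟩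
        rw [Set.eq_empty_iff_forall_notMem] at he
        refine he (l.map Inv.inv).reverse.length ⟨(l.map Inv.inv).reverse, rfl, ?_, ?_⟩
        · intro x hx
          simp only [List.mem_reverse, List.mem_map] at hx
          obtain ⟨y, hy, rfl⟩ := hx
          exact gens_inv π (hg' y hy)
        · rw [List.prod_reverse_noncomm, List.map_map]; simp [hp']
      simp [wdist, he, he']
    · obtain ⟨l, hl, hg, hp⟩ := Nat.sInf_mem hne
      have := wdist_le π (l := (l.map Inv.inv).reverse) (g := h) (h := g)
        (by
          intro x hx
          simp only [List.mem_reverse, List.mem_map] at hx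
          obtain ⟨y, hy, rfl⟩ := hx
          exact gens_inv π (hg y hy))
        (by rw [List.prod_reverse_noncomm, List.map_map]; simp [hp])
      simpa [hl, wdist] using this
  exact le_antisymm (key h g) (key g h)

lemma wdist_one_inv (π : FreeMonoid A →* G) (g : G) : wdist π 1 g⁻¹ = wdist π 1 g := by
  have h1 : wdist π 1 g⁻¹ = wdist π g 1 := by simp [wdist]
  rw [h1, wdist_symm]

/-- Lipschitz bound for word metric under a homomorphism. -/
lemma wdist_map (π : FreeMonoid A →* G) (hπ : Function.Surjective π)
    (π' : FreeMonoid B →* G') (hπ' : Function.Surjective π') (φ : G →* G') (K : ℕ)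
    (hK : ∀ s ∈ gens π, wdist π' 1 (φ s) ≤ K) (g h : G) :
    wdist π' (φ g) (φ h) ≤ K * wdist π g h := by
  obtain ⟨l, hl, hg, hp⟩ := wdist_exists π hπ g h
  have main : ∀ l : List G, (∀ x ∈ l, x ∈ gens π) →
      ∃ m : List G', m.length ≤ K * l.length ∧ (∀ x ∈ m, x ∈ gens π') ∧
        m.prod = φ l.prod := by
    intro l
    induction l with
    | nil => intro _; exact ⟨[], by simp, by simp, by simp⟩
    | cons s t ih =>
      intro hmem
      obtain ⟨m, hml, hmg, hmp⟩ := ih (fun x hx => hmem x (List.mem_cons_of_mem s hx))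
      have hsg : s ∈ gens π := hmem s List.mem_cons_self
      obtain ⟨ms, hmsl, hmsg, hmsp⟩ := wdist_exists π' hπ' 1 (φ s)
      refine ⟨ms ++ m, ?_, ?_, ?_⟩
      · have h1 : ms.length ≤ K := hmsl ▸ hK s hsg
        calc (ms ++ m).length = ms.length + m.length := List.length_append
          _ ≤ K + K * t.length := Nat.add_le_add h1 hml
          _ = K * (s :: t).length := by rw [List.length_cons]; ring
      · intro x hx
        exact (List.mem_append.mp hx).elim (hmsg x) (hmg x)
      · rw [List.prod_append, hmsp, hmp, List.prod_cons, map_mul]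
        simp
  obtain ⟨m, hml, hmg, hmp⟩ := main l hg
  have := wdist_le π' (g := φ g) (h := φ h) hmg
    (by rw [hmp, hp, map_mul, map_inv])
  calc wdist π' (φ g) (φ h) ≤ m.length := this
    _ ≤ K * l.length := hml
    _ = K * wdist π g h := by rw [hl]

end AuxWdist

/-- The BRP, the synchronous BRP and the FT-BRP are preserved under
composition of homomorphisms. -/
theorem brp_comp {A₁ A₂ A₃ G₁ G₂ G₃ : Type*} [Fintype A₁] [Fintype A₂] [Fintype A₃]
    [Group G₁] [Group G₂] [Group G₃]
    (π₁ : FreeMonoid A₁ →* G₁) (hπ₁ : Function.Surjective π₁)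
    (π₂ : FreeMonoid A₂ →* G₂) (hπ₂ : Function.Surjective π₂)
    (π₃ : FreeMonoid A₃ →* G₃) (hπ₃ : Function.Surjective π₃)
    (L₁ : Language A₁) (L₂ : Language A₂) (L₃ : Language A₃)
    (h₁ : IsAutomaticStructure π₁ L₁) (h₂ : IsAutomaticStructure π₂ L₂)
    (h₃ : IsAutomaticStructure π₃ L₃)
    (φ₁ : G₁ →* G₂) (φ₂ : G₂ →* G₃) :
    (BRP π₁ π₂ φ₁ L₁ L₂ → BRP π₂ π₃ φ₂ L₂ L₃ →
      BRP π₁ π₃ (φ₂.comp φ₁) L₁ L₃) ∧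
    (SyncBRP π₁ π₂ φ₁ L₁ L₂ → SyncBRP π₂ π₃ φ₂ L₂ L₃ →
      SyncBRP π₁ π₃ (φ₂.comp φ₁) L₁ L₃) ∧
    (FTBRP π₁ π₂ φ₁ L₁ L₂ → FTBRP π₂ π₃ φ₂ L₂ L₃ →
      FTBRP π₁ π₃ (φ₂.comp φ₁) L₁ L₃) := by
  classical
  set K : ℕ := Finset.univ.sup (fun a : A₂ => wdist π₃ 1 (φ₂ (π₂ (FreeMonoid.of a)))) with hKdef
  have hK : ∀ s ∈ gens π₂, wdist π₃ 1 (φ₂ s) ≤ K := by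
    rintro s (⟨a, rfl⟩ | ⟨a, rfl⟩)
    · rw [hKdef]; exact Finset.le_sup (f := fun a : A₂ => wdist π₃ 1 (φ₂ (π₂ (FreeMonoid.of a)))) (Finset.mem_univ a)
    · rw [map_inv, wdist_one_inv, hKdef]
      exact Finset.le_sup (f := fun a : A₂ => wdist π₃ 1 (φ₂ (π₂ (FreeMonoid.of a)))) (Finset.mem_univ a)
  have hmap : ∀ g h : G₂, wdist π₃ (φ₂ g) (φ₂ h) ≤ K * wdist π₂ g h :=
    wdist_map π₂ hπ₂ π₃ hπ₃ φ₂ K hK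
  refine ⟨?_, ?_, ?_⟩
  · -- BRP
    rintro ⟨N₁, hN₁⟩ ⟨N₂, hN₂⟩
    refine ⟨K * N₁ + N₂, ?_⟩
    intro x α hα γ hγ hev
    obtain ⟨β, hβ, hβev⟩ := h₂.onto (φ₁ (evalW π₁ α))
    have hev₂ : evalW π₃ γ = φ₂ (evalW π₂ β) := by rw [hβev]; exact hev
    obtain ⟨hH₁, hH₁'⟩ := hN₁ x α hα β hβ hβev
    obtain ⟨hH₂, hH₂'⟩ := hN₂ (φ₁ x) β hβ γ hγ hev₂
    constructor
    · rintro s ⟨n, rfl⟩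
      obtain ⟨t, ⟨m, rfl⟩, ht⟩ := hH₁ (φ₁ (x * evalW π₁ (α.take n))) ⟨n, rfl⟩
      obtain ⟨u, ⟨k, rfl⟩, hu⟩ := hH₂ (φ₂ (φ₁ x * evalW π₂ (β.take m))) ⟨m, rfl⟩
      refine ⟨φ₂ (φ₁ x) * evalW π₃ (γ.take k), ⟨k, rfl⟩, ?_⟩
      have h1 := hmap (φ₁ (x * evalW π₁ (α.take n))) (φ₁ x * evalW π₂ (β.take m))
      calc wdist π₃ ((φ₂.comp φ₁) (x * evalW π₁ (α.take n)))
            (φ₂ (φ₁ x) * evalW π₃ (γ.take k))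
          ≤ wdist π₃ ((φ₂.comp φ₁) (x * evalW π₁ (α.take n)))
              (φ₂ (φ₁ x * evalW π₂ (β.take m))) +
            wdist π₃ (φ₂ (φ₁ x * evalW π₂ (β.take m)))
              (φ₂ (φ₁ x) * evalW π₃ (γ.take k)) :=
            wdist_triangle π₃ hπ₃ _ _ _
        _ ≤ K * N₁ + N₂ :=
            Nat.add_le_add (le_trans h1 (Nat.mul_le_mul_left K ht)) hu
    · rintro t ⟨n, rfl⟩
      obtain ⟨u, ⟨m, rfl⟩, hu⟩ := hH₂' ((φ₂.comp φ₁) x * evalW π₃ (γ.take n)) ⟨n, rfl⟩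
      obtain ⟨v, ⟨k, rfl⟩, hv⟩ := hH₁' (φ₁ x * evalW π₂ (β.take m)) ⟨m, rfl⟩
      refine ⟨(φ₂.comp φ₁) (x * evalW π₁ (α.take k)), ⟨k, rfl⟩, ?_⟩
      have h1 := hmap (φ₁ x * evalW π₂ (β.take m)) (φ₁ (x * evalW π₁ (α.take k)))
      calc wdist π₃ ((φ₂.comp φ₁) x * evalW π₃ (γ.take n))
            ((φ₂.comp φ₁) (x * evalW π₁ (α.take k)))
          ≤ wdist π₃ ((φ₂.comp φ₁) x * evalW π₃ (γ.take n))
              (φ₂ (φ₁ x * evalW π₂ (β.take m))) +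
            wdist π₃ (φ₂ (φ₁ x * evalW π₂ (β.take m)))
              ((φ₂.comp φ₁) (x * evalW π₁ (α.take k))) :=
            wdist_triangle π₃ hπ₃ _ _ _
        _ ≤ N₂ + K * N₁ :=
            Nat.add_le_add hu (le_trans h1 (Nat.mul_le_mul_left K hv))
        _ = K * N₁ + N₂ := Nat.add_comm _ _
  · -- SyncBRP
    rintro ⟨N₁, hN₁⟩ ⟨N₂, hN₂⟩
    refine ⟨K * N₁ + N₂, ?_⟩
    intro x α hα γ hγ hev n
    obtain ⟨β, hβ, hβev⟩ := h₂.onto (φ₁ (evalW π₁ α))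
    have hev₂ : evalW π₃ γ = φ₂ (evalW π₂ β) := by rw [hβev]; exact hev
    have h1 := hN₁ x α hα β hβ hβev n
    have h2 := hN₂ (φ₁ x) β hβ γ hγ hev₂ n
    have h1' := hmap (φ₁ (x * evalW π₁ (α.take n))) (φ₁ x * evalW π₂ (β.take n))
    calc wdist π₃ ((φ₂.comp φ₁) (x * evalW π₁ (α.take n)))
          ((φ₂.comp φ₁) x * evalW π₃ (γ.take n))
        ≤ wdist π₃ ((φ₂.comp φ₁) (x * evalW π₁ (α.take n)))
            (φ₂ (φ₁ x * evalW π₂ (β.take n))) +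
          wdist π₃ (φ₂ (φ₁ x * evalW π₂ (β.take n)))
            ((φ₂.comp φ₁) x * evalW π₃ (γ.take n)) := wdist_triangle π₃ hπ₃ _ _ _
      _ ≤ K * N₁ + N₂ :=
          Nat.add_le_add (le_trans h1' (Nat.mul_le_mul_left K h1)) h2
  · -- FTBRP
    intro hF₁ hF₂ p
    obtain ⟨q, hq⟩ := hF₁ p
    obtain ⟨r, hr⟩ := hF₂ q
    refine ⟨r, ?_⟩
    intro u₁ hu₁ u₂ hu₂ u₃ hu₃ w₁ hw₁ w₂ hw₂ w₃ hw₃ he₁ he₂ he₃ hmft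
    obtain ⟨v₁, hv₁, hv₁e⟩ := h₂.onto (φ₁ (evalW π₁ u₁))
    obtain ⟨v₂, hv₂, hv₂e⟩ := h₂.onto (φ₁ (evalW π₁ u₂))
    obtain ⟨v₃, hv₃, hv₃e⟩ := h₂.onto (φ₁ (evalW π₁ u₃))
    have hmft₂ := hq u₁ hu₁ u₂ hu₂ u₃ hu₃ v₁ hv₁ v₂ hv₂ v₃ hv₃ hv₁e hv₂e hv₃e hmft
    exact hr v₁ hv₁ v₂ hv₂ v₃ hv₃ w₁ hw₁ w₂ hw₂ w₃ hw₃
      (by rw [he₁, hv₁e]; rfl) (by rw [he₂, hv₂e]; rfl) (by rw [he₃, hv₃e]; rfl) hmft₂
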